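/- Ellenberg–Venkatesh–Westerland braid lemma: Let G be a finite group, c ⊆ G a conjugacy class whose elements generate G, and g ∈ c. There exists an integer R such that for every r ≥ R, every tuple (g₁,…,g_r) ∈ c^r whose entries generate G is braid-equivalent to a tuple (g, g'₂,…,g'_r) whose first entry is g and whose last r−1 entries g'₂,…,g'_r generate G. -/

import Mathlib

/-- The elementary braid move `Q_i`: `w` is obtained from `v` by replacing
`(…, g_i, g_{i+1}, …)` with `(…, g_i g_{i+1} g_i⁻¹, g_i, …)`. -/
def BraidStep {G : Type*} [Group G] {r : ℕ} (v w : Fin r → G) : Prop :=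
  ∃ i : ℕ, ∃ h : i + 1 < r,
    w ⟨i, Nat.lt_of_succ_lt h⟩ =
      v ⟨i, Nat.lt_of_succ_lt h⟩ * v ⟨i + 1, h⟩ * (v ⟨i, Nat.lt_of_succ_lt h⟩)⁻¹ ∧
    w ⟨i + 1, h⟩ = v ⟨i, Nat.lt_of_succ_lt h⟩ ∧
    ∀ j : Fin r, j.val ≠ i → j.val ≠ i + 1 → w j = v j

/-- Two tuples are braid-equivalent if they are related by the equivalence relation
generated by the elementary braid moves and their inverses (the Hurwitz action of `B_r`). -/
def BraidEquiv {G : Type*} [Group G] {r : ℕ} (v w : Fin r → G) : Prop :=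
  Relation.EqvGen BraidStep v w


namespace EVWAux

variable {G : Type*} [Group G]

/-- Elementary braid move on lists. -/
def LStep (l₁ l₂ : List G) : Prop :=
  ∃ (X : List G) (a b : G) (Y : List G),
    l₁ = X ++ a :: b :: Y ∧ l₂ = X ++ (a * b * a⁻¹) :: a :: Y

/-- Braid equivalence on lists. -/
def LEquiv (l₁ l₂ : List G) : Prop := Relation.EqvGen LStep l₁ l₂

lemma LEquiv.rfl {l : List G} : LEquiv l l := Relation.EqvGen.refl l

lemma LEquiv.symm {l₁ l₂ : List G} (h : LEquiv l₁ l₂) : LEquiv l₂ l₁ :=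
  Relation.EqvGen.symm _ _ h

lemma LEquiv.trans {l₁ l₂ l₃ : List G} (h : LEquiv l₁ l₂) (h' : LEquiv l₂ l₃) :
    LEquiv l₁ l₃ := Relation.EqvGen.trans _ _ _ h h'

lemma LStep.lequiv {l₁ l₂ : List G} (h : LStep l₁ l₂) : LEquiv l₁ l₂ :=
  Relation.EqvGen.rel _ _ h

lemma LEquiv.lift (f : List G → List G)
    (hf : ∀ a b, LStep a b → LStep (f a) (f b)) {l₁ l₂ : List G}
    (h : LEquiv l₁ l₂) : LEquiv (f l₁) (f l₂) := by
  induction h with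
  | rel a b hab => exact (hf a b hab).lequiv
  | refl a => exact LEquiv.rfl
  | symm a b _ ih => exact ih.symm
  | trans a b c _ _ ih₁ ih₂ => exact ih₁.trans ih₂

lemma LStep.cons (a : G) {l₁ l₂ : List G} (h : LStep l₁ l₂) :
    LStep (a :: l₁) (a :: l₂) := by
  obtain ⟨X, x, y, Y, rfl, rfl⟩ := h
  exact ⟨a :: X, x, y, Y, rfl, rfl⟩

lemma LEquiv.cons (a : G) {l₁ l₂ : List G} (h : LEquiv l₁ l₂) :
    LEquiv (a :: l₁) (a :: l₂) :=
  h.lift _ (fun _ _ hs => hs.cons a)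

lemma LEquiv.appendLeft (Z : List G) {l₁ l₂ : List G} (h : LEquiv l₁ l₂) :
    LEquiv (Z ++ l₁) (Z ++ l₂) := by
  induction Z with
  | nil => simpa using h
  | cons a Z ih => simpa using ih.cons a

lemma LStep.appendRight (Z : List G) {l₁ l₂ : List G} (h : LStep l₁ l₂) :
    LStep (l₁ ++ Z) (l₂ ++ Z) := by
  obtain ⟨X, x, y, Y, rfl, rfl⟩ := h
  exact ⟨X, x, y, Y ++ Z, by simp, by simp⟩

lemma LEquiv.appendRight (Z : List G) {l₁ l₂ : List G} (h : LEquiv l₁ l₂) :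
    LEquiv (l₁ ++ Z) (l₂ ++ Z) :=
  h.lift _ (fun _ _ hs => hs.appendRight Z)

lemma step_fwd (a b : G) (Y : List G) :
    LStep (a :: b :: Y) ((a * b * a⁻¹) :: a :: Y) :=
  ⟨[], a, b, Y, rfl, rfl⟩

lemma equiv_fwd (a b : G) (Y : List G) :
    LEquiv (a :: b :: Y) ((a * b * a⁻¹) :: a :: Y) := (step_fwd a b Y).lequiv

lemma equiv_bwd (a b : G) (Y : List G) :
    LEquiv (a :: b :: Y) (b :: (b⁻¹ * a * b) :: Y) := by
  have h := (equiv_fwd b (b⁻¹ * a * b) Y).symm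
  have e : b * (b⁻¹ * a * b) * b⁻¹ = a := by group
  rw [e] at h
  exact h

lemma LStep.length_eq {l₁ l₂ : List G} (h : LStep l₁ l₂) : l₁.length = l₂.length := by
  obtain ⟨X, x, y, Y, rfl, rfl⟩ := h; simp

lemma LEquiv.length_eq {l₁ l₂ : List G} (h : LEquiv l₁ l₂) : l₁.length = l₂.length := by
  induction h with
  | rel a b hab => exact hab.length_eq
  | refl a => rfl
  | symm a b _ ih => omega
  | trans a b c _ _ ih₁ ih₂ => omega

/-- A block `B` moves right past `y`; the block is unchanged, `y` is conjugated by the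
block product. -/
lemma blockRight (B : List G) (y : G) (Y : List G) :
    LEquiv (B ++ y :: Y) ((B.prod * y * B.prod⁻¹) :: (B ++ Y)) := by
  induction B generalizing Y with
  | nil => simpa using LEquiv.rfl
  | cons a B ih =>
    have h1 : LEquiv (a :: (B ++ y :: Y)) (a :: ((B.prod * y * B.prod⁻¹) :: (B ++ Y))) :=
      (ih Y).cons a
    have h2 := equiv_fwd a (B.prod * y * B.prod⁻¹) (B ++ Y)
    have e : a * (B.prod * y * B.prod⁻¹) * a⁻¹ = (a :: B).prod * y * ((a :: B).prod)⁻¹ := by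
      simp [List.prod_cons, mul_assoc]
    rw [e] at h2
    simpa using h1.trans h2

/-- A host `x` sweeps right across a block `B`, conjugating every entry of the block. -/
lemma sweepRight (x : G) (B : List G) (Y : List G) :
    LEquiv (x :: (B ++ Y)) (B.map (fun q => x * q * x⁻¹) ++ x :: Y) := by
  induction B generalizing Y with
  | nil => simpa using LEquiv.rfl
  | cons p B ih =>
    have h1 := equiv_fwd x p (B ++ Y)
    have h2 : LEquiv ((x * p * x⁻¹) :: (x :: (B ++ Y)))
        ((x * p * x⁻¹) :: (B.map (fun q => x * q * x⁻¹) ++ x :: Y)) := (ih Y).cons _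
    simpa using h1.trans h2

/-- A mover `y` moves left across `A` unchanged, conjugating the entries it passes. -/
lemma moveLeft (A : List G) (y : G) (Y : List G) :
    LEquiv (A ++ y :: Y) (y :: (A.map (fun q => y⁻¹ * q * y) ++ Y)) := by
  induction A generalizing Y with
  | nil => simpa using LEquiv.rfl
  | cons a A ih =>
    have h1 : LEquiv (a :: (A ++ y :: Y)) (a :: (y :: (A.map (fun q => y⁻¹ * q * y) ++ Y))) :=
      (ih Y).cons a
    have h2 := equiv_bwd a y (A.map (fun q => y⁻¹ * q * y) ++ Y)
    simpa using h1.trans h2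

/-- A block with trivial product commutes past any list with zero damage. -/
lemma commute (B : List G) (hB : B.prod = 1) (Z W : List G) :
    LEquiv (B ++ (Z ++ W)) (Z ++ (B ++ W)) := by
  induction Z generalizing W with
  | nil => exact LEquiv.rfl
  | cons z Z ih =>
    have h1 : LEquiv (B ++ (z :: (Z ++ W))) ((B.prod * z * B.prod⁻¹) :: (B ++ (Z ++ W))) :=
      blockRight B z (Z ++ W)
    rw [hB] at h1
    simp only [one_mul, inv_one, mul_one] at h1
    have h1' : LEquiv (B ++ (z :: Z ++ W)) (z :: (B ++ (Z ++ W))) := by simpa using h1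
    exact h1'.trans ((ih W).cons z)



lemma conj_pow'' (z q : G) (n : ℕ) : (z * q * z⁻¹) ^ n = z * q ^ n * z⁻¹ := by
  induction n with
  | zero => simp
  | succ n ih => rw [pow_succ, pow_succ, ih]; group

lemma submonoid_closure_top [Finite G] {S : Set G} (h : Subgroup.closure S = ⊤) :
    Submonoid.closure S = ⊤ := by
  have hinv : ∀ x : G, x ∈ Submonoid.closure S → x⁻¹ ∈ Submonoid.closure S := by
    intro x hx
    have hpos : 0 < orderOf x := orderOf_pos x
    have hxo : x * x ^ (orderOf x - 1) = 1 := by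
      rw [← pow_succ']
      have he : orderOf x - 1 + 1 = orderOf x := by omega
      rw [he]
      exact pow_orderOf_eq_one x
    rw [inv_eq_of_mul_eq_one_right hxo]
    exact pow_mem hx _
  let H : Subgroup G := { Submonoid.closure S with inv_mem' := fun {x} hx => hinv x hx }
  have hle : Subgroup.closure S ≤ H := (Subgroup.closure_le H).mpr Submonoid.subset_closure
  rw [h] at hle
  rw [Submonoid.eq_top_iff']
  intro x
  exact hle (Subgroup.mem_top x)

lemma pigeon [Finite G] [DecidableEq G] (l : List G) (K : ℕ)
    (hK : ∀ v : G, l.count v ≤ K) : l.length ≤ Nat.card G * K := by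
  letI := Fintype.ofFinite G
  have h1 : ∑ a ∈ l.toFinset, l.count a = l.length := by
    have h2 := Multiset.toFinset_sum_count_eq (↑l : Multiset G)
    simpa using h2
  rw [← h1]
  calc ∑ a ∈ l.toFinset, l.count a ≤ l.toFinset.card * K := by
        apply Finset.sum_le_card_nsmul
        intro x _; exact hK x
    _ ≤ Nat.card G * K := by
        have := Finset.card_le_univ l.toFinset
        have hcard : Fintype.card G = Nat.card G := by
          simp [Nat.card_eq_fintype_card]
        have hle : l.toFinset.card ≤ Nat.card G := by
          rw [← hcard]; simpa using this
        exact Nat.mul_le_mul_right K hle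


lemma closure_LStep {l₁ l₂ : List G} (h : LStep l₁ l₂) :
    Subgroup.closure {x : G | x ∈ l₁} = Subgroup.closure {x : G | x ∈ l₂} := by
  obtain ⟨X, a, b, Y, rfl, rfl⟩ := h
  have m2 : ∀ y : G, y ∈ X ++ (a * b * a⁻¹) :: a :: Y →
      y ∈ Subgroup.closure {x : G | x ∈ X ++ (a * b * a⁻¹) :: a :: Y} :=
    fun y hy => Subgroup.subset_closure hy
  have m1 : ∀ y : G, y ∈ X ++ a :: b :: Y →
      y ∈ Subgroup.closure {x : G | x ∈ X ++ a :: b :: Y} :=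
    fun y hy => Subgroup.subset_closure hy
  apply le_antisymm
  · rw [Subgroup.closure_le]
    intro x hx
    simp only [Set.mem_setOf_eq, List.mem_append, List.mem_cons] at hx
    simp only [SetLike.mem_coe]
    rcases hx with hX | rfl | rfl | hY
    · exact m2 x (by simp [hX])
    · exact m2 x (by simp)
    · have ha := m2 a (by simp)
      have hc := m2 (a * x * a⁻¹) (by simp)
      have hmem := mul_mem (mul_mem (inv_mem ha) hc) ha
      have e : a⁻¹ * (a * x * a⁻¹) * a = x := by group
      rwa [e] at hmem
    · exact m2 x (by simp [hY])
  · rw [Subgroup.closure_le]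
    intro x hx
    simp only [Set.mem_setOf_eq, List.mem_append, List.mem_cons] at hx
    simp only [SetLike.mem_coe]
    rcases hx with hX | rfl | rfl | hY
    · exact m1 x (by simp [hX])
    · have ha := m1 a (by simp)
      have hb := m1 b (by simp)
      exact mul_mem (mul_mem ha hb) (inv_mem ha)
    · exact m1 x (by simp)
    · exact m1 x (by simp [hY])

lemma closure_LEquiv {l₁ l₂ : List G} (h : LEquiv l₁ l₂) :
    Subgroup.closure {x : G | x ∈ l₁} = Subgroup.closure {x : G | x ∈ l₂} := by
  induction h with
  | rel a b hab => exact closure_LStep hab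
  | refl a => rfl
  | symm a b _ ih => exact ih.symm
  | trans a b c _ _ ih₁ ih₂ => exact ih₁.trans ih₂

/-- Conjugating the taxi block by one available letter. -/
lemma one_letter {n : ℕ} {p : G} (hp : p ^ n = 1) (y : G) (X Y : List G)
    (hy : y ∈ X ++ Y) :
    ∃ X' Y' : List G, X' ++ Y' = X ++ Y ∧
      LEquiv (X ++ (List.replicate n p ++ Y))
        (X' ++ (List.replicate n (y * p * y⁻¹) ++ Y')) := by
  have hBprod : (List.replicate n p).prod = 1 := by
    rw [List.prod_replicate]; exact hp
  have hmap : (List.replicate n p).map (fun q => y * q * y⁻¹)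
      = List.replicate n (y * p * y⁻¹) := by
    simp
  rcases List.mem_append.mp hy with hX | hY
  · obtain ⟨X₁, X₂, rfl⟩ := List.append_of_mem hX
    refine ⟨X₁, y :: (X₂ ++ Y), by simp, ?_⟩
    have c1 : LEquiv (X₂ ++ (List.replicate n p ++ Y))
        (List.replicate n p ++ (X₂ ++ Y)) := (commute _ hBprod X₂ Y).symm
    have c2 := c1.cons y
    have c3 : LEquiv (y :: (List.replicate n p ++ (X₂ ++ Y)))
        (List.replicate n (y * p * y⁻¹) ++ y :: (X₂ ++ Y)) := by
      have := sweepRight y (List.replicate n p) (X₂ ++ Y)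
      rwa [hmap] at this
    have c4 := (c2.trans c3).appendLeft X₁
    have c5 := c4.appendLeft []
    simpa [List.append_assoc] using c4
  · obtain ⟨Y₁, Y₂, rfl⟩ := List.append_of_mem hY
    refine ⟨X ++ Y₁, y :: Y₂, by simp, ?_⟩
    have c1 : LEquiv (List.replicate n p ++ ((Y₁ ++ [y]) ++ Y₂))
        ((Y₁ ++ [y]) ++ (List.replicate n p ++ Y₂)) := commute _ hBprod (Y₁ ++ [y]) Y₂
    have c3 : LEquiv (y :: (List.replicate n p ++ Y₂))
        (List.replicate n (y * p * y⁻¹) ++ y :: Y₂) := by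
      have := sweepRight y (List.replicate n p) Y₂
      rwa [hmap] at this
    have c4 := c3.appendLeft Y₁
    have c5 := (c1.trans (by simpa [List.append_assoc] using c4)).appendLeft X
    simpa [List.append_assoc] using c5

/-- Conjugating the taxi block by the product of a word of available letters. -/
lemma word {n : ℕ} {p : G} (hp : p ^ n = 1) (W X Y : List G)
    (hW : ∀ y ∈ W, y ∈ X ++ Y) :
    ∃ X' Y' : List G, X' ++ Y' = X ++ Y ∧
      LEquiv (X ++ (List.replicate n p ++ Y))
        (X' ++ (List.replicate n (W.prod * p * W.prod⁻¹) ++ Y')) := by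
  induction W with
  | nil =>
    refine ⟨X, Y, rfl, ?_⟩
    simpa using LEquiv.rfl (l := X ++ (List.replicate n p ++ Y))
  | cons y W ih =>
    obtain ⟨X₁, Y₁, h₁, e₁⟩ := ih (fun z hz => hW z (List.mem_cons_of_mem y hz))
    have hy : y ∈ X₁ ++ Y₁ := by rw [h₁]; exact hW y List.mem_cons_self
    have hp₁ : (W.prod * p * W.prod⁻¹) ^ n = 1 := by
      rw [conj_pow'', hp]; group
    obtain ⟨X₂, Y₂, h₂, e₂⟩ := one_letter hp₁ y X₁ Y₁ hy
    refine ⟨X₂, Y₂, h₂.trans h₁, ?_⟩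
    have evalue : y * (W.prod * p * W.prod⁻¹) * y⁻¹
        = (y :: W).prod * p * ((y :: W).prod)⁻¹ := by
      rw [List.prod_cons]; group
    rw [evalue] at e₂
    exact e₁.trans e₂

/-- Extract `n` copies of `v` to the front. -/
lemma extract [DecidableEq G] (v : G) :
    ∀ (n : ℕ) (l : List G), n ≤ l.count v →
      ∃ rest : List G, LEquiv l (List.replicate n v ++ rest) ∧
        l.count v = rest.count v + n
  | 0, l, _ => ⟨l, by simpa using LEquiv.rfl (l := l), by simp⟩
  | (n + 1), l, h => by
    have hvl : v ∈ l := by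
      by_contra hv
      rw [List.count_eq_zero_of_not_mem hv] at h
      omega
    obtain ⟨X, Y, rfl⟩ := List.append_of_mem hvl
    have e1 : LEquiv (X ++ v :: Y) (v :: (X.map (fun q => v⁻¹ * q * v) ++ Y)) :=
      moveLeft X v Y
    have hinj : Function.Injective (fun q : G => v⁻¹ * q * v) := by
      intro a b hab
      simp only at hab
      have h₂ : v⁻¹ * a = v⁻¹ * b := mul_right_cancel hab
      exact mul_left_cancel h₂
    have hfv : (fun q : G => v⁻¹ * q * v) v = v := by group
    have hc1 : (X.map (fun q : G => v⁻¹ * q * v)).count v = X.count v := by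
      have h' := List.count_map_of_injective X (fun q : G => v⁻¹ * q * v) hinj v
      have e : v⁻¹ * v * v = v := by group
      rwa [e] at h'
    have hcount : (X.map (fun q : G => v⁻¹ * q * v) ++ Y).count v + 1
        = (X ++ v :: Y).count v := by
      simp [List.count_append, hc1, List.count_cons]
      omega
    have hb : n ≤ (X.map (fun q : G => v⁻¹ * q * v) ++ Y).count v := by omega
    obtain ⟨rest, e2, hc⟩ := extract v n _ hb
    refine ⟨rest, ?_, by omega⟩
    have e3 := e2.cons v
    have : LEquiv (X ++ v :: Y) (v :: (List.replicate n v ++ rest)) := e1.trans e3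
    simpa [List.replicate_succ] using this

/-! ### Bridge between lists and `Fin r → G` tuples -/

def toFn (r : ℕ) (l : List G) (h : l.length = r) : Fin r → G :=
  fun i => l[i.val]'(by rw [h]; exact i.isLt)

lemma getElem_mid0 (X : List G) (c₁ c₂ : G) (Y : List G)
    (h : X.length < (X ++ c₁ :: c₂ :: Y).length) :
    (X ++ c₁ :: c₂ :: Y)[X.length] = c₁ := by
  rw [List.getElem_append_right (Nat.le_refl X.length)]
  simp

lemma getElem_mid1 (X : List G) (c₁ c₂ : G) (Y : List G)
    (h : X.length + 1 < (X ++ c₁ :: c₂ :: Y).length) :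
    (X ++ c₁ :: c₂ :: Y)[X.length + 1] = c₂ := by
  rw [List.getElem_append_right (by omega : X.length ≤ X.length + 1)]
  have e : X.length + 1 - X.length = 1 := by omega
  simp [e]

lemma bridge_step {r : ℕ} {l₁ l₂ : List G} (hs : LStep l₁ l₂)
    (h₁ : l₁.length = r) (h₂ : l₂.length = r) :
    BraidStep (toFn r l₁ h₁) (toFn r l₂ h₂) := by
  obtain ⟨X, a, b, Y, rfl, rfl⟩ := hs
  have hlen : X.length + 1 < r := by
    simp only [List.length_append, List.length_cons] at h₁; omega
  refine ⟨X.length, hlen, ?_, ?_, ?_⟩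
  · show (X ++ (a * b * a⁻¹) :: a :: Y)[X.length]'_ = _
    rw [getElem_mid0]
    show a * b * a⁻¹
        = (X ++ a :: b :: Y)[X.length]'_ * (X ++ a :: b :: Y)[X.length + 1]'_ *
          ((X ++ a :: b :: Y)[X.length]'_)⁻¹
    rw [getElem_mid0, getElem_mid1]
  · show (X ++ (a * b * a⁻¹) :: a :: Y)[X.length + 1]'_ = (X ++ a :: b :: Y)[X.length]'_
    rw [getElem_mid0, getElem_mid1]
  · intro j hj hj1
    show (X ++ (a * b * a⁻¹) :: a :: Y)[j.val]'_ = (X ++ a :: b :: Y)[j.val]'_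
    rcases Nat.lt_or_ge j.val X.length with hlt | hge
    · rw [List.getElem_append_left hlt, List.getElem_append_left hlt]
    · have hge2 : X.length + 2 ≤ j.val := by
        rcases Nat.lt_or_ge j.val (X.length + 2) with h' | h'
        · omega
        · exact h'
      rw [List.getElem_append_right hge, List.getElem_append_right hge]
      obtain ⟨m, hm⟩ : ∃ m, j.val - X.length = m + 2 := ⟨j.val - X.length - 2, by omega⟩
      simp only [hm]
      rfl

lemma bridge {r : ℕ} {l₁ l₂ : List G} (e : LEquiv l₁ l₂) :
    ∀ (h₁ : l₁.length = r) (h₂ : l₂.length = r),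
      BraidEquiv (toFn r l₁ h₁) (toFn r l₂ h₂) := by
  induction e with
  | rel a b hab =>
    intro h₁ h₂
    exact Relation.EqvGen.rel _ _ (bridge_step hab h₁ h₂)
  | refl a =>
    intro h₁ h₂
    exact Relation.EqvGen.refl _
  | symm a b hab ih =>
    intro h₁ h₂
    exact Relation.EqvGen.symm _ _ (ih h₂ h₁)
  | trans a b c hab hbc ih₁ ih₂ =>
    intro h₁ h₂
    have hb : b.length = r := by rw [← LEquiv.length_eq hab, h₁]
    exact Relation.EqvGen.trans _ _ _ (ih₁ h₁ hb) (ih₂ hb h₂)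

end EVWAux

/-- Ellenberg–Venkatesh–Westerland braid lemma: for `r` suitably large, every `r`-tuple
with entries in the generating conjugacy class `c` whose entries generate `G` is
braid-equivalent to a tuple whose first entry is `g` and whose remaining entries
generate `G`. -/
theorem evw_braid_lemma {G : Type*} [Group G] [Finite G] (c : Set G)
    (hconj : ∃ x : G, c = {y | IsConj x y})
    (hgen : Subgroup.closure c = ⊤) (g : G) (hg : g ∈ c) :
    ∃ R : ℕ, 1 ≤ R ∧ ∀ r : ℕ, R ≤ r → ∀ v : Fin r → G, (∀ i, v i ∈ c) →
      Subgroup.closure (Set.range v) = ⊤ →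
      ∃ w : Fin r → G, BraidEquiv v w ∧
        (∀ i : Fin r, i.val = 0 → w i = g) ∧
        Subgroup.closure {x : G | ∃ i : Fin r, i.val ≠ 0 ∧ w i = x} = ⊤ := by
  classical
  open EVWAux in
  obtain ⟨x₀, hc⟩ := hconj
  refine ⟨2 * Nat.card G * Nat.card G + 1, by omega, ?_⟩
  intro r hr v hv hvgen
  set l : List G := List.ofFn v with hl
  have hlen : l.length = r := by simp [hl]
  -- pigeonhole: some entry value occurs at least 2 * |G| + 1 times
  have hpig : ∃ u : G, 2 * Nat.card G + 1 ≤ l.count u := by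
    by_contra hcon
    push_neg at hcon
    have hble : ∀ u : G, l.count u ≤ 2 * Nat.card G := fun u => by
      have := hcon u; omega
    have hb := EVWAux.pigeon l (2 * Nat.card G) hble
    rw [hlen] at hb
    have he : Nat.card G * (2 * Nat.card G) = 2 * Nat.card G * Nat.card G := by ring
    omega
  obtain ⟨u, hu⟩ := hpig
  have hul : u ∈ l := by
    by_contra h
    rw [List.count_eq_zero_of_not_mem h] at hu
    omega
  have huc : u ∈ c := by
    have hur : u ∈ Set.range v := (List.mem_ofFn (f := v) (a := u)).mp (hl ▸ hul)
    obtain ⟨i, hi⟩ := hur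
    rw [← hi]; exact hv i
  -- conjugator from u to g
  have hconj_ug : IsConj u g := by
    rw [hc] at huc hg
    exact (IsConj.symm huc).trans hg
  obtain ⟨z₀, hz₀⟩ := isConj_iff.mp hconj_ug
  -- the taxi block size
  set n : ℕ := 2 * orderOf u with hn
  have hupos : 0 < orderOf u := orderOf_pos u
  have hun : u ^ n = 1 := by
    rw [hn, mul_comm, pow_mul, pow_orderOf_eq_one, one_pow]
  have hnle : n ≤ 2 * Nat.card G := by
    have hdvd := orderOf_dvd_natCard u
    have hpos : 0 < Nat.card G := Nat.card_pos
    have := Nat.le_of_dvd hpos hdvd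
    omega
  have hcount : n ≤ l.count u := by omega
  obtain ⟨rest, e1, hrest⟩ := EVWAux.extract u n l hcount
  have hurest : u ∈ rest := by
    by_contra h
    rw [List.count_eq_zero_of_not_mem h] at hrest
    omega
  -- the set of values of `rest` generates G
  have hclosl : Subgroup.closure {x : G | x ∈ l} = ⊤ := by
    have hset : {x : G | x ∈ l} = Set.range v := by
      ext y; simp [hl, List.mem_ofFn, Set.mem_range, eq_comm]
    rw [hset]; exact hvgen
  have hsetrr : {x : G | x ∈ List.replicate n u ++ rest} = {x : G | x ∈ rest} := by
    ext y
    simp only [Set.mem_setOf_eq, List.mem_append, List.mem_replicate]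
    constructor
    · rintro (⟨-, rfl⟩ | h)
      · exact hurest
      · exact h
    · exact fun h => Or.inr h
  have hclosrest : Subgroup.closure {x : G | x ∈ rest} = ⊤ := by
    rw [← hsetrr, ← EVWAux.closure_LEquiv e1]
    exact hclosl
  -- write the conjugator as a word in the values of rest
  have hmono := EVWAux.submonoid_closure_top hclosrest
  have hz₀mem : z₀ ∈ Submonoid.closure {x : G | x ∈ rest} := by
    rw [hmono]; trivial
  obtain ⟨W, hWmem, hWprod⟩ := Submonoid.exists_list_of_mem_closure hz₀mem
  -- run the machine
  obtain ⟨X', Y', hXY, e2⟩ :=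
    EVWAux.word hun W [] rest (fun y hy => by simpa using hWmem y hy)
  rw [hWprod, hz₀] at e2
  have hgn : g ^ n = 1 := by
    rw [← hz₀, conj_pow'', hun]; group
  have e3 : LEquiv (X' ++ (List.replicate n g ++ Y'))
      (List.replicate n g ++ (X' ++ Y')) := by
    refine (EVWAux.commute _ ?_ X' Y').symm
    rw [List.prod_replicate]; exact hgn
  have efin : LEquiv l (List.replicate n g ++ (X' ++ Y')) := by
    refine e1.trans (LEquiv.trans ?_ e3)
    simpa using e2
  have hτlen : (List.replicate n g ++ (X' ++ Y')).length = r := by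
    rw [← efin.length_eq, hlen]
  set w : Fin r → G := EVWAux.toFn r (List.replicate n g ++ (X' ++ Y')) hτlen with hw
  have hbraid : BraidEquiv v w := by
    have hb := EVWAux.bridge efin hlen hτlen
    have hveq : EVWAux.toFn r l hlen = v := by
      funext i
      simp [EVWAux.toFn, hl]
    rw [hveq] at hb
    exact hb
  have hn2 : 2 ≤ n := by omega
  refine ⟨w, hbraid, ?_, ?_⟩
  · intro i hi
    show (List.replicate n g ++ (X' ++ Y'))[i.val]'_ = g
    have h0 : i.val < (List.replicate n g).length := by
      rw [List.length_replicate]; omega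
    rw [List.getElem_append_left h0]
    exact List.getElem_replicate _
  · have hsub : {x : G | x ∈ rest} ⊆ {x : G | ∃ i : Fin r, i.val ≠ 0 ∧ w i = x} := by
    -- every value of rest appears in a nonzero position of w
      intro y hy
      have hyXY : y ∈ X' ++ Y' := by
        have : X' ++ Y' = rest := by simpa using hXY
        rw [this]; exact hy
      obtain ⟨j, hj, hjy⟩ := List.getElem_of_mem hyXY
      have hlen2 : n + (X'.length + Y'.length) = r := by
        rw [← hτlen]; simp
      have hj' : j < X'.length + Y'.length := by simpa using hj
      have hjr : n + j < r := by omega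
      refine ⟨⟨n + j, hjr⟩, by show n + j ≠ 0; omega, ?_⟩
      show (List.replicate n g ++ (X' ++ Y'))[n + j]'_ = y
      rw [List.getElem_append_right (by simp : (List.replicate n g).length ≤ n + j)]
      simpa using hjy
    have hle := Subgroup.closure_mono hsub
    rw [hclosrest] at hle
    exact top_unique hle
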